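/- Let n > 1, κ > 0, β ≠ 0, ν ≠ 0 be real constants with c² − ν² > 0, and let U₀ ≥ 0 be a real constant. Define U : ℝ → ℝ by U(ξ) = ( (c² − ν²) / ( U₀ (c² − ν²) exp( −(c² − ν²)(n − 1) ξ / (β ν) ) + κ ν² ) )^{1/(n−1)} (real power). Then U is differentiable and solves the Bernoulli-type ODE β ν U′(ξ) + ν² κ U(ξ)ⁿ + (ν² − c²) U(ξ) = 0 for all ξ ∈ ℝ, where U(ξ)ⁿ denotes the real power U(ξ)^n. -/

import Mathlib

/-- The explicit profile
`U(ξ) = ((c² − ν²)/(U₀ (c² − ν²) e^{−(c²−ν²)(n−1)ξ/(βν)} + κ ν²))^{1/(n−1)}`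
is differentiable and solves the Bernoulli-type ODE
`β ν U′ + ν² κ Uⁿ + (ν² − c²) U = 0`. -/
theorem bernoulli_profile_solves_ODE
    (n κ β ν c U₀ : ℝ)
    (hn : n > 1) (hκ : κ > 0) (hβ : β ≠ 0) (hν : ν ≠ 0)
    (hc : c ^ 2 - ν ^ 2 > 0) (hU₀ : U₀ ≥ 0) :
    Differentiable ℝ (fun ξ : ℝ =>
      ((c ^ 2 - ν ^ 2) /
        (U₀ * (c ^ 2 - ν ^ 2) * Real.exp (-(c ^ 2 - ν ^ 2) * (n - 1) * ξ / (β * ν))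
          + κ * ν ^ 2)) ^ (1 / (n - 1))) ∧
    ∀ ξ : ℝ,
      β * ν * deriv (fun ξ' : ℝ =>
          ((c ^ 2 - ν ^ 2) /
            (U₀ * (c ^ 2 - ν ^ 2) * Real.exp (-(c ^ 2 - ν ^ 2) * (n - 1) * ξ' / (β * ν))
              + κ * ν ^ 2)) ^ (1 / (n - 1))) ξ
        + ν ^ 2 * κ *
            (((c ^ 2 - ν ^ 2) /
              (U₀ * (c ^ 2 - ν ^ 2) * Real.exp (-(c ^ 2 - ν ^ 2) * (n - 1) * ξ / (β * ν))
                + κ * ν ^ 2)) ^ (1 / (n - 1))) ^ n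
        + (ν ^ 2 - c ^ 2) *
            ((c ^ 2 - ν ^ 2) /
              (U₀ * (c ^ 2 - ν ^ 2) * Real.exp (-(c ^ 2 - ν ^ 2) * (n - 1) * ξ / (β * ν))
                + κ * ν ^ 2)) ^ (1 / (n - 1))
        = 0 := by
  have hβν : β * ν ≠ 0 := mul_ne_zero hβ hν
  have hn1 : n - 1 > 0 := by linarith
  set A := c ^ 2 - ν ^ 2 with hA
  have hApos : 0 < A := hc
  have hDpos : ∀ ξ : ℝ,
      0 < U₀ * A * Real.exp (-A * (n - 1) * ξ / (β * ν)) + κ * ν ^ 2 := by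
    intro ξ
    have h1 : 0 ≤ U₀ * A * Real.exp (-A * (n - 1) * ξ / (β * ν)) := by positivity
    have h2 : 0 < κ * ν ^ 2 := by positivity
    linarith
  have key : ∀ ξ : ℝ, HasDerivAt (fun ξ' : ℝ =>
      (A / (U₀ * A * Real.exp (-A * (n - 1) * ξ' / (β * ν)) + κ * ν ^ 2)) ^ (1 / (n - 1)))
      (((0 * (U₀ * A * Real.exp (-A * (n - 1) * ξ / (β * ν)) + κ * ν ^ 2)
          - A * (U₀ * A * (Real.exp (-A * (n - 1) * ξ / (β * ν)) * (-A * (n - 1) / (β * ν)))))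
        / (U₀ * A * Real.exp (-A * (n - 1) * ξ / (β * ν)) + κ * ν ^ 2) ^ 2)
        * (1 / (n - 1))
        * (A / (U₀ * A * Real.exp (-A * (n - 1) * ξ / (β * ν)) + κ * ν ^ 2)) ^ (1 / (n - 1) - 1)) ξ := by
    intro ξ
    have hlin : HasDerivAt (fun ξ' : ℝ => -A * (n - 1) * ξ' / (β * ν))
        (-A * (n - 1) / (β * ν)) ξ := by
      have h := ((hasDerivAt_id ξ).const_mul (-A * (n - 1))).div_const (β * ν)
      simpa using h
    have hexp := hlin.exp
    have hD := (hexp.const_mul (U₀ * A)).add_const (κ * ν ^ 2)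
    have hf := (hasDerivAt_const ξ A).div hD (ne_of_gt (hDpos ξ))
    have hxpos : 0 < A / (U₀ * A * Real.exp (-A * (n - 1) * ξ / (β * ν)) + κ * ν ^ 2) :=
      div_pos hApos (hDpos ξ)
    exact hf.rpow_const (Or.inl (ne_of_gt hxpos))
  constructor
  · intro ξ
    exact (key ξ).differentiableAt
  · intro ξ
    rw [(key ξ).deriv]
    set E := Real.exp (-A * (n - 1) * ξ / (β * ν)) with hE
    have hEpos : 0 < E := Real.exp_pos _
    have hDp : 0 < U₀ * A * E + κ * ν ^ 2 := hDpos ξ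
    set D := U₀ * A * E + κ * ν ^ 2 with hDdef
    have hxpos : 0 < A / D := div_pos hApos hDp
    have hpow1 : ((A / D) ^ (1 / (n - 1))) ^ n = (A / D) ^ (1 / (n - 1)) * (A / D) := by
      rw [← Real.rpow_mul hxpos.le]
      have h : 1 / (n - 1) * n = 1 / (n - 1) + 1 := by
        field_simp
        ring
      rw [h, Real.rpow_add hxpos, Real.rpow_one]
    have hpow2 : (A / D) ^ (1 / (n - 1) - 1) = (A / D) ^ (1 / (n - 1)) / (A / D) := by
      rw [Real.rpow_sub hxpos, Real.rpow_one]
    rw [hpow1, hpow2]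
    have hnc : ν ^ 2 - c ^ 2 = -A := by rw [hA]; ring
    rw [hnc]
    set T := (A / D) ^ (1 / (n - 1)) with hT
    rw [hDdef]
    have hAne : A ≠ 0 := ne_of_gt hApos
    have hDne : U₀ * A * E + κ * ν ^ 2 ≠ 0 := ne_of_gt hDp
    have hn1ne : n - 1 ≠ 0 := ne_of_gt hn1
    field_simp
    ring
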